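/- Let K ≥ 2 and let η : {1,…,K} × {1,…,K} → (0,∞) satisfy: for every L ≥ 1 and all j_1,…,j_L ∈ {1,…,K}, the cyclic product η_{j_1→j_2} ⋯ η_{j_L→j_1} ≥ 1. Fix a base vertex b ∈ {1,…,K}, set edge weights w(k,ℓ) = log η_{k→ℓ}, and let d(ℓ) = min(b→ℓ) be the minimum weight over simple walks from b to ℓ (with d(b) = 0). Define θ ∈ ℝ^K by θ_ℓ = exp(d(ℓ)) / Σ_{j=1}^K exp(d(j)). Then θ ∈ Δ, all entries θ_ℓ are strictly positive, and θ_ℓ ≤ η_{k→ℓ} · θ_k for all k, ℓ ∈ {1,…,K}. -/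

import Mathlib

noncomputable section

/-- The weight of the walk `j 0, j 1, …, j m` for edge weights `w`. -/
def walkWeight (K : ℕ) (w : Fin K → Fin K → ℝ) (m : ℕ) (j : Fin (m + 1) → Fin K) : ℝ :=
  ∑ i : Fin m, w (j i.castSucc) (j i.succ)

/-- The minimum weight over simple walks (pairwise distinct vertices) from `a` to `b`. -/
def minWalk (K : ℕ) (w : Fin K → Fin K → ℝ) (a b : Fin K) : ℝ :=
  sInf {v : ℝ | ∃ (m : ℕ) (j : Fin (m + 1) → Fin K),
    j 0 = a ∧ j (Fin.last m) = b ∧ Function.Injective j ∧ v = walkWeight K w m j}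

def walkSet (K : ℕ) (w : Fin K → Fin K → ℝ) (a b : Fin K) : Set ℝ :=
  {v : ℝ | ∃ (m : ℕ) (j : Fin (m + 1) → Fin K),
    j 0 = a ∧ j (Fin.last m) = b ∧ Function.Injective j ∧ v = walkWeight K w m j}

lemma walkSet_finite (K : ℕ) (w : Fin K → Fin K → ℝ) (a b : Fin K) :
    (walkSet K w a b).Finite := by
  apply Set.Finite.subset (Set.Finite.biUnion (Finset.range K).finite_toSet
    (fun m _ => Set.finite_range (walkWeight K w m)))
  rintro v ⟨m, j, h0, hl, hinj, rfl⟩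
  refine Set.mem_biUnion ?_ ⟨j, rfl⟩
  simp only [Finset.coe_range, Set.mem_Iio]
  have := Fintype.card_le_of_injective j hinj
  simpa using this

lemma walkSet_nonempty (K : ℕ) (w : Fin K → Fin K → ℝ) (a b : Fin K) :
    (walkSet K w a b).Nonempty := by
  by_cases hab : a = b
  · exact ⟨walkWeight K w 0 (fun _ => a), 0, fun _ => a, rfl, hab, fun x y _ => Subsingleton.elim (α := Fin 1) x y, rfl⟩
  · refine ⟨walkWeight K w 1 ![a, b], 1, ![a, b], rfl, rfl, ?_, rfl⟩
    intro x y hxy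
    fin_cases x <;> fin_cases y <;> simp_all

lemma minWalk_le (K : ℕ) (w : Fin K → Fin K → ℝ) (a b : Fin K) {v : ℝ}
    (hv : v ∈ walkSet K w a b) : sInf (walkSet K w a b) ≤ v :=
  csInf_le (walkSet_finite K w a b).bddBelow hv

lemma minWalk_mem (K : ℕ) (w : Fin K → Fin K → ℝ) (a b : Fin K) :
    sInf (walkSet K w a b) ∈ walkSet K w a b :=
  (walkSet_nonempty K w a b).csInf_mem (walkSet_finite K w a b)

lemma walkWeight_eq (K : ℕ) (w : Fin K → Fin K → ℝ) (m : ℕ) (j : Fin (m + 1) → Fin K)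
    (J : ℕ → Fin K) (hJ : ∀ t (h : t ≤ m), J t = j ⟨t, Nat.lt_succ_of_le h⟩) :
    walkWeight K w m j = ∑ t ∈ Finset.range m, w (J t) (J (t + 1)) := by
  rw [walkWeight, ← Fin.sum_univ_eq_sum_range (fun t => w (J t) (J (t + 1))) m]
  apply Finset.sum_congr rfl
  intro i _
  rw [hJ i (le_of_lt i.isLt), hJ (i + 1) i.isLt]
  congr 1

lemma key (K : ℕ) (w : Fin K → Fin K → ℝ)
    (hcyc : ∀ (L : ℕ) (c : Fin (L + 1) → Fin K), 0 ≤ ∑ i : Fin (L + 1), w (c i) (c (i + 1)))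
    (b k ℓ : Fin K) :
    sInf (walkSet K w b ℓ) ≤ w k ℓ + sInf (walkSet K w b k) := by
  obtain ⟨m, j, h0, hl, hinj, hv⟩ := minWalk_mem K w b k
  set J : ℕ → Fin K := fun t => j ⟨min t m, by omega⟩ with hJdef
  have hJ : ∀ t (h : t ≤ m), J t = j ⟨t, Nat.lt_succ_of_le h⟩ := by
    intro t h; simp only [hJdef]; congr 1; exact Fin.ext (by simp [Nat.min_eq_left h])
  have hW := walkWeight_eq K w m j J hJ
  by_cases hmem : ∃ i : Fin (m + 1), j i = ℓ
  · obtain ⟨i, hi⟩ := hmem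
    set n : ℕ := i.val with hn
    have hnm : n ≤ m := Nat.lt_succ_iff.mp i.isLt
    -- prefix walk
    have hpre : (∑ t ∈ Finset.range n, w (J t) (J (t + 1))) ∈ walkSet K w b ℓ := by
      refine ⟨n, fun t => j (Fin.castLE (by omega) t), ?_, ?_, ?_, ?_⟩
      · simpa using h0
      · show j (Fin.castLE (by omega) (Fin.last n)) = ℓ
        rw [← hi]
        congr 1
        all_goals exact Fin.ext (by simp [hn])
      · exact hinj.comp (Fin.castLE_injective _)
      · rw [walkWeight_eq K w n _ J]
        intro t h
        rw [hJ t (le_trans h hnm)]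
        congr 1
    have h1 : sInf (walkSet K w b ℓ) ≤ ∑ t ∈ Finset.range n, w (J t) (J (t + 1)) :=
      minWalk_le K w b ℓ hpre
    -- split total
    set L : ℕ := m - n with hL
    have hsplit : sInf (walkSet K w b k) =
        (∑ t ∈ Finset.range n, w (J t) (J (t + 1))) +
        ∑ t ∈ Finset.Ico n m, w (J t) (J (t + 1)) := by
      rw [hv, hW, Finset.range_eq_Ico, ← Finset.sum_Ico_consecutive _ (Nat.zero_le n) hnm, Finset.range_eq_Ico]
    -- cycle
    have hcycle : 0 ≤ (∑ t ∈ Finset.Ico n m, w (J t) (J (t + 1))) + w k ℓ := by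
      have hc := hcyc L (fun t => J (n + t.val))
      have heq : (∑ t : Fin (L + 1), w (J (n + t.val)) (J (n + ((t : Fin (L+1)) + 1).val)))
          = (∑ t ∈ Finset.Ico n m, w (J t) (J (t + 1))) + w k ℓ := by
        rw [Fin.sum_univ_castSucc]
        congr 1
        · rw [Finset.sum_Ico_eq_sum_range, ← Fin.sum_univ_eq_sum_range
            (fun t => w (J (n + t)) (J (n + t + 1))) L]
          apply Finset.sum_congr rfl
          intro t _
          have h1 : ((t.castSucc : Fin (L + 1)) : ℕ) = t.val := rfl
          have h2 : (((t.castSucc : Fin (L + 1)) + 1 : Fin (L + 1)) : ℕ) = t.val + 1 := by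
            have : t.castSucc + 1 = t.succ := Fin.coeSucc_eq_succ
            rw [this, Fin.val_succ]
          rw [h1, h2]
          congr 1
        · have h3 : ((Fin.last L : Fin (L + 1)) : ℕ) = L := rfl
          have h4 : ((Fin.last L + 1 : Fin (L + 1)) : ℕ) = 0 := by
            rw [Fin.last_add_one, Fin.val_zero]
          rw [h3, h4]
          have hJm : J (n + L) = k := by
            rw [hJ (n + L) (by omega), ← hl]
            congr 1
            all_goals exact Fin.ext (by simp [hL]; omega)
          have hJn : J (n + 0) = ℓ := by
            rw [hJ (n + 0) (by omega), ← hi]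
            congr 1
            all_goals exact Fin.ext (by simp [hn])
          rw [hJm, hJn]
      rw [heq] at hc
      exact hc
    linarith [h1, hsplit, hcycle]
  · -- extend the walk by ℓ
    push_neg at hmem
    have hnew : (sInf (walkSet K w b k) + w k ℓ) ∈ walkSet K w b ℓ := by
      refine ⟨m + 1, Fin.snoc j ℓ, ?_, ?_, ?_, ?_⟩
      · rw [show (0 : Fin (m + 2)) = Fin.castSucc 0 by rfl, Fin.snoc_castSucc, h0]
      · simp
      · intro x y hxy
        induction x using Fin.lastCases with
        | last =>
          induction y using Fin.lastCases with
          | last => rfl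
          | cast z =>
            rw [Fin.snoc_last, Fin.snoc_castSucc] at hxy
            exact absurd hxy.symm (hmem z)
        | cast z =>
          induction y using Fin.lastCases with
          | last =>
            rw [Fin.snoc_last, Fin.snoc_castSucc] at hxy
            exact absurd hxy (hmem z)
          | cast u =>
            rw [Fin.snoc_castSucc, Fin.snoc_castSucc] at hxy
            exact congrArg Fin.castSucc (hinj hxy)
      · rw [hv]
        rw [walkWeight, walkWeight, Fin.sum_univ_castSucc]
        congr 1
        · apply Finset.sum_congr rfl
          intro t _
          rw [show (t.castSucc : Fin (m+1)).castSucc = (t.castSucc : Fin (m+1)).castSucc from rfl]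
          rw [Fin.succ_castSucc, Fin.snoc_castSucc, Fin.snoc_castSucc]
        · rw [show (Fin.last m).succ = Fin.last (m + 1) from rfl, Fin.snoc_last,
            Fin.snoc_castSucc, hl]
    have := minWalk_le K w b ℓ hnew
    linarith

theorem stmt9 (K : ℕ) (hK : 2 ≤ K) (η : Fin K → Fin K → ℝ)
    (hpos : ∀ k ℓ, 0 < η k ℓ)
    (hcyc : ∀ (L : ℕ) (j : Fin (L + 1) → Fin K),
      1 ≤ ∏ i : Fin (L + 1), η (j i) (j (i + 1)))
    (b : Fin K) (d : Fin K → ℝ)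
    (hd : ∀ ℓ, d ℓ = minWalk K (fun i j => Real.log (η i j)) b ℓ)
    (θ : Fin K → ℝ)
    (hθ : ∀ ℓ, θ ℓ = Real.exp (d ℓ) / ∑ j : Fin K, Real.exp (d j)) :
    θ ∈ stdSimplex ℝ (Fin K) ∧ (∀ ℓ, 0 < θ ℓ) ∧ ∀ k ℓ, θ ℓ ≤ η k ℓ * θ k := by
  haveI : NeZero K := ⟨by omega⟩
  set w : Fin K → Fin K → ℝ := fun i j => Real.log (η i j) with hw
  have hcyc' : ∀ (L : ℕ) (c : Fin (L + 1) → Fin K),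
      0 ≤ ∑ i : Fin (L + 1), w (c i) (c (i + 1)) := by
    intro L c
    have h1 : ∑ i : Fin (L + 1), w (c i) (c (i + 1))
        = Real.log (∏ i : Fin (L + 1), η (c i) (c (i + 1))) := by
      rw [Real.log_prod]
      intro i _
      exact (hpos _ _).ne'
    rw [h1]
    exact Real.log_nonneg (hcyc L c)
  have hSpos : 0 < ∑ j : Fin K, Real.exp (d j) :=
    Finset.sum_pos (fun j _ => Real.exp_pos _) ⟨0, Finset.mem_univ _⟩
  have hθpos : ∀ ℓ, 0 < θ ℓ := fun ℓ => by
    rw [hθ ℓ]; exact div_pos (Real.exp_pos _) hSpos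
  refine ⟨⟨fun ℓ => (hθpos ℓ).le, ?_⟩, hθpos, ?_⟩
  · rw [funext hθ]
    simp only
    rw [← Finset.sum_div, div_self hSpos.ne']
  · intro k ℓ
    have hkey : d ℓ ≤ w k ℓ + d k := by
      rw [hd ℓ, hd k]
      exact key K w hcyc' b k ℓ
    have hexp : Real.exp (d ℓ) ≤ η k ℓ * Real.exp (d k) := by
      calc Real.exp (d ℓ) ≤ Real.exp (w k ℓ + d k) := Real.exp_le_exp.mpr hkey
        _ = η k ℓ * Real.exp (d k) := by
            rw [Real.exp_add, hw]; simp only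
            rw [Real.exp_log (hpos k ℓ)]
    rw [hθ ℓ, hθ k]
    rw [div_le_iff₀ hSpos, mul_assoc, div_mul_cancel₀ _ hSpos.ne']
    exact hexp
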